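/- Consider the naming protocol N_n on a set A of n agents in the Immediate Observation (IO) model, where each agent has integer variables my_id and max_id, both initially 1, and when an agent a_r is the reactor of an interaction with starter a_s: a_r increments my_id by 1 if a_s's my_id equals a_r's my_id, and a_r sets max_id to the maximum of its own my_id and max_id and a_s's my_id and max_id. Then, in every globally fair execution: (i) the maximum value M of max_id over all agents strictly increases at some later point if and only if, at the current point, two agents share the same value of my_id; and (ii) eventually the my_id values of the agents are pairwise distinct, stable forever after, and equal exactly to {1, 2, ..., n}; in particular when M = n each agent has a unique stable value of my_id. -/

import Mathlib

/-- An interaction: an ordered pair of distinct agents (starter, reactor). -/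
structure Interaction (n : ℕ) where
  s : Fin n
  r : Fin n
  ne : s ≠ r

/-- Apply a transition rule via an interaction to a configuration. -/
def applyRule {n : ℕ} {Q : Type*} (rule : Q → Q → Q × Q)
    (i : Interaction n) (C : Fin n → Q) : Fin n → Q := fun a =>
  if a = i.s then (rule (C i.s) (C i.r)).1
  else if a = i.r then (rule (C i.s) (C i.r)).2
  else C a

/-- The execution induced by a step function and an initial configuration. -/
def execWith {n : ℕ} {Q : Type*} (step : ℕ → (Fin n → Q) → (Fin n → Q))
    (C0 : Fin n → Q) : ℕ → Fin n → Q
  | 0 => C0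
  | m + 1 => step m (execWith step C0 m)

/-- A set of configurations is closed if it is invariant under permuting the agents. -/
def PermClosed {n : ℕ} {Q : Type*} (S : Set (Fin n → Q)) : Prop :=
  ∀ C ∈ S, ∀ σ : Equiv.Perm (Fin n), (C ∘ σ) ∈ S

/-- Global fairness (set-based) of an execution, relative to a one-step reachability
relation `canStep`. -/
def GloballyFair {n : ℕ} {Q : Type*}
    (canStep : (Fin n → Q) → (Fin n → Q) → Prop) (Γ : ℕ → Fin n → Q) : Prop :=
  ∀ S S' : Set (Fin n → Q), PermClosed S → PermClosed S' →
    (∀ C ∈ S, ∃ C' ∈ S', canStep C C') →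
    {m | Γ m ∈ S}.Infinite → {m | Γ m ∈ S'}.Infinite

/-- One-step reachability in the two-way (non-omissive) model with rule `δ`. -/
def TWStep {n : ℕ} {Q : Type*} (δ : Q → Q → Q × Q) (C C' : Fin n → Q) : Prop :=
  ∃ i : Interaction n, C' = applyRule δ i C
/-- The transition rule of the naming protocol `N_n` in the IO model. Each agent's
state is the pair `(my_id, max_id)`. The starter's state never changes; the reactor
increments `my_id` if the starter's `my_id` equals its own, and updates `max_id` to the
maximum of its (updated) `my_id`, its `max_id`, and the starter's `my_id` and
`max_id`. -/
def nameRule : ℕ × ℕ → ℕ × ℕ → (ℕ × ℕ) × (ℕ × ℕ) := fun s r =>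
  (s, (if s.1 = r.1 then r.1 + 1 else r.1,
       max (max (if s.1 = r.1 then r.1 + 1 else r.1) r.2) (max s.1 s.2)))

namespace NameAux

variable {n : ℕ}

/-- count of agents with my_id ≥ v -/
def cnt (C : Fin n → ℕ × ℕ) (v : ℕ) : ℕ :=
  (Finset.univ.filter (fun a => v ≤ (C a).1)).card

def Inv (C : Fin n → ℕ × ℕ) : Prop :=
  ∀ v, 0 < cnt C (v+2) → cnt C (v+2) < cnt C (v+1)

lemma step_fst (i : Interaction n) (C : Fin n → ℕ × ℕ) (a : Fin n) :
    ((applyRule nameRule i C) a).1 =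
      if a = i.r ∧ (C i.s).1 = (C i.r).1 then (C i.r).1 + 1 else (C a).1 := by
  have hne : i.s ≠ i.r := i.ne
  unfold applyRule nameRule
  by_cases hs : a = i.s
  · have h2 : a ≠ i.r := by rw [hs]; exact i.ne
    simp [hs, h2, hne]
  · by_cases hr : a = i.r
    · by_cases he : (C i.s).1 = (C i.r).1 <;> simp [hs, hr, he, hne.symm]
    · simp [hs, hr]

lemma step_snd (i : Interaction n) (C : Fin n → ℕ × ℕ) (a : Fin n) :
    ((applyRule nameRule i C) a).2 =
      if a = i.r then
        max (max ((applyRule nameRule i C a).1) ((C a).2)) (max ((C i.s).1) ((C i.s).2))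
      else (C a).2 := by
  have hne : i.s ≠ i.r := i.ne
  unfold applyRule nameRule
  by_cases hs : a = i.s
  · have h2 : a ≠ i.r := by rw [hs]; exact i.ne
    simp [hs, h2, hne]
  · by_cases hr : a = i.r
    · simp [hs, hr, hne.symm, max_assoc]
    · simp [hs, hr]

lemma step_fst_mono (i : Interaction n) (C : Fin n → ℕ × ℕ) (a : Fin n) :
    (C a).1 ≤ ((applyRule nameRule i C) a).1 := by
  rw [step_fst]
  split
  · next h => rw [h.1]; omega
  · exact le_refl _

lemma step_snd_mono (i : Interaction n) (C : Fin n → ℕ × ℕ) (a : Fin n) :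
    (C a).2 ≤ ((applyRule nameRule i C) a).2 := by
  rw [step_snd]
  split
  · exact le_max_of_le_left (le_max_right _ _)
  · exact le_refl _

def supFst (C : Fin n → ℕ × ℕ) : ℕ := Finset.univ.sup (fun a => (C a).1)

lemma le_supFst (C : Fin n → ℕ × ℕ) (a : Fin n) : (C a).1 ≤ supFst C := by
  exact Finset.le_sup (f := fun b => (C b).1) (Finset.mem_univ a)

lemma supFst_step_mono (i : Interaction n) (C : Fin n → ℕ × ℕ) :
    supFst C ≤ supFst (applyRule nameRule i C) :=
  Finset.sup_mono_fun (fun a _ => step_fst_mono i C a)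

lemma step_fst_le_snd (i : Interaction n) (C : Fin n → ℕ × ℕ)
    (h : ∀ b, (C b).1 ≤ (C b).2) (a : Fin n) :
    ((applyRule nameRule i C) a).1 ≤ ((applyRule nameRule i C) a).2 := by
  rw [step_snd]
  split
  · exact le_max_of_le_left (le_max_left _ _)
  · next hr =>
    rw [step_fst]
    rw [if_neg (fun hc => hr hc.1)]
    exact h a

lemma step_snd_le_supFst (i : Interaction n) (C : Fin n → ℕ × ℕ)
    (h : ∀ b, (C b).2 ≤ supFst C) (a : Fin n) :
    ((applyRule nameRule i C) a).2 ≤ supFst (applyRule nameRule i C) := by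
  have hmono := supFst_step_mono i C
  rw [step_snd]
  split
  · refine max_le (max_le ?_ ?_) (max_le ?_ ?_)
    · exact le_supFst _ a
    · exact le_trans (h a) hmono
    · exact le_trans (le_supFst C i.s) hmono
    · exact le_trans (h i.s) hmono
  · exact le_trans (h a) hmono

lemma two_le_cnt (C : Fin n → ℕ × ℕ) (a b : Fin n) (v : ℕ) (hab : a ≠ b)
    (ha : (C a).1 = v) (hb : (C b).1 = v) :
    cnt C (v+1) + 2 ≤ cnt C v := by
  have hasub : insert a (insert b (Finset.univ.filter (fun x => v + 1 ≤ (C x).1)))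
      ⊆ Finset.univ.filter (fun x => v ≤ (C x).1) := by
    intro x hx
    simp only [Finset.mem_insert, Finset.mem_filter, Finset.mem_univ, true_and] at hx ⊢
    rcases hx with rfl | rfl | hx
    · omega
    · omega
    · omega
  have hbn : b ∉ Finset.univ.filter (fun x => v + 1 ≤ (C x).1) := by
    simp [hb]
  have han : a ∉ insert b (Finset.univ.filter (fun x => v + 1 ≤ (C x).1)) := by
    simp [hab, ha]
  have := Finset.card_le_card hasub
  rw [Finset.card_insert_of_notMem han, Finset.card_insert_of_notMem hbn] at this
  unfold cnt
  omega

lemma cnt_step (i : Interaction n) (C : Fin n → ℕ × ℕ)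
    (he : (C i.s).1 = (C i.r).1) (w : ℕ) :
    cnt (applyRule nameRule i C) w =
      if w = (C i.r).1 + 1 then cnt C w + 1 else cnt C w := by
  set v := (C i.r).1 with hv
  have hfst : ∀ a, ((applyRule nameRule i C) a).1 = if a = i.r then v + 1 else (C a).1 := by
    intro a
    rw [step_fst]
    by_cases hr : a = i.r <;> simp [hr, he, ← hv]
  by_cases hw : w = v + 1
  · subst hw
    rw [if_pos rfl]
    unfold cnt
    have : (Finset.univ.filter (fun a => v + 1 ≤ ((applyRule nameRule i C) a).1))
        = insert i.r (Finset.univ.filter (fun a => v + 1 ≤ (C a).1)) := by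
      ext a
      simp only [Finset.mem_filter, Finset.mem_univ, true_and, Finset.mem_insert, hfst a]
      by_cases hr : a = i.r <;> simp [hr]
    rw [this, Finset.card_insert_of_notMem (by simp [← hv])]
  · rw [if_neg hw]
    unfold cnt
    congr 1
    apply Finset.filter_congr
    intro a _
    rw [hfst a]
    by_cases hr : a = i.r
    · simp only [hr, if_pos rfl]
      constructor <;> intro h <;> simp at h ⊢ <;> omega
    · rw [if_neg hr]

lemma Inv_step (i : Interaction n) (C : Fin n → ℕ × ℕ) (hI : Inv C) :
    Inv (applyRule nameRule i C) := by
  by_cases he : (C i.s).1 = (C i.r).1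
  · set v := (C i.r).1 with hv
    intro w
    rw [cnt_step i C he, cnt_step i C he]
    by_cases h2 : w + 2 = v + 1
    · -- w + 1 = v, goal cnt C (v) +1 ... : need two_le_cnt
      rw [if_pos h2, if_neg (by omega)]
      intro _
      have hchain := two_le_cnt C i.s i.r v i.ne he hv.symm
      have hw1 : w + 1 = v := by omega
      rw [h2, hw1]
      omega
    · by_cases h1 : w + 1 = v + 1
      · rw [if_neg h2, if_pos h1]
        intro hp
        have := hI w hp
        omega
      · rw [if_neg h2, if_neg h1]
        exact hI w
  · -- fst unchanged
    have hfst : ∀ a, ((applyRule nameRule i C) a).1 = (C a).1 := by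
      intro a
      rw [step_fst, if_neg (fun hc => he hc.2)]
    have hc : ∀ w, cnt (applyRule nameRule i C) w = cnt C w := by
      intro w
      unfold cnt
      congr 1
      apply Finset.filter_congr
      intro a _
      rw [hfst a]
    intro w
    rw [hc, hc]
    exact hI w

lemma cnt_le_n (C : Fin n → ℕ × ℕ) (v : ℕ) : cnt C v ≤ n := by
  unfold cnt
  calc (Finset.univ.filter (fun a => v ≤ (C a).1)).card ≤ Finset.univ.card :=
        Finset.card_filter_le _ _
    _ = n := by simp

lemma cnt_upper (C : Fin n → ℕ × ℕ) (hI : Inv C) : ∀ v, cnt C (v+1) ≤ n - v := by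
  intro v
  induction v with
  | zero => simpa using cnt_le_n C 1
  | succ w ih =>
    show cnt C (w+2) ≤ n - (w+1)
    by_cases h : 0 < cnt C (w+2)
    · have := hI w h
      omega
    · omega

lemma fst_le_n (C : Fin n → ℕ × ℕ) (hI : Inv C) (a : Fin n) : (C a).1 ≤ n := by
  by_contra h
  push_neg at h
  have h1 : 0 < cnt C (n+1) := by
    apply Finset.card_pos.2
    exact ⟨a, by simp; omega⟩
  have := cnt_upper C hI n
  omega

lemma supFst_le_n (C : Fin n → ℕ × ℕ) (hI : Inv C) : supFst C ≤ n :=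
  Finset.sup_le (fun a _ => fst_le_n C hI a)

lemma cnt_lower (C : Fin n → ℕ × ℕ) (hI : Inv C) (hpos : 0 < cnt C n) :
    ∀ j, j < n → j + 1 ≤ cnt C (n - j) := by
  intro j
  induction j with
  | zero => intro _; rw [Nat.sub_zero]; omega
  | succ k ih =>
    intro hk
    have hik := ih (by omega)
    have h2 : 2 ≤ n - k := by omega
    have hv : n - k = (n - k - 2) + 2 := by omega
    have := hI (n - k - 2)
    rw [← hv] at this
    have h1 : n - k - 2 + 1 = n - (k + 1) := by omega
    rw [h1] at this
    have := this (by omega)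
    omega

lemma inj_of_cnt (C : Fin n → ℕ × ℕ) (hn : 1 ≤ n) (hI : Inv C)
    (hone : ∀ a, 1 ≤ (C a).1) (hpos : 0 < cnt C n) :
    Function.Injective (fun a => (C a).1) := by
  -- cnt C v = n + 1 - v for 1 ≤ v ≤ n
  have hcnt : ∀ v, 1 ≤ v → v ≤ n → cnt C v = n + 1 - v := by
    intro v h1 h2
    have hlow := cnt_lower C hI hpos (n - v) (by omega)
    rw [show n - (n - v) = v by omega] at hlow
    have hup := cnt_upper C hI (v - 1)
    rw [show v - 1 + 1 = v by omega] at hup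
    omega
  intro a b hab
  by_contra hne
  set v := (C a).1 with hv
  have h1 : 1 ≤ v := hone a
  have h2 : v ≤ n := fst_le_n C hI a
  have h2c := two_le_cnt C a b v hne hv.symm (by simpa using hab.symm)
  have hvv := hcnt v h1 h2
  by_cases hvn : v = n
  · have : cnt C (v+1) ≤ n - v := cnt_upper C hI v
    omega
  · have := hcnt (v+1) (by omega) (by omega)
    omega

lemma image_eq_Icc (C : Fin n → ℕ × ℕ) (hI : Inv C)
    (hone : ∀ a, 1 ≤ (C a).1)
    (hinj : Function.Injective (fun a => (C a).1)) :
    (Finset.univ.image fun a : Fin n => (C a).1) = Finset.Icc 1 n := by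
  apply Finset.eq_of_subset_of_card_le
  · intro x hx
    simp only [Finset.mem_image, Finset.mem_univ, true_and] at hx
    obtain ⟨a, rfl⟩ := hx
    exact Finset.mem_Icc.2 ⟨hone a, fst_le_n C hI a⟩
  · rw [Finset.card_image_of_injective _ hinj]
    simp

lemma supFst_eq_n (C : Fin n → ℕ × ℕ) (hn : 1 ≤ n) (hI : Inv C)
    (hone : ∀ a, 1 ≤ (C a).1)
    (hinj : Function.Injective (fun a => (C a).1)) :
    supFst C = n := by
  have himg := image_eq_Icc C hI hone hinj
  have hmem : n ∈ Finset.Icc 1 n := Finset.mem_Icc.2 ⟨hn, le_refl n⟩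
  rw [← himg] at hmem
  simp only [Finset.mem_image, Finset.mem_univ, true_and] at hmem
  obtain ⟨a, ha⟩ := hmem
  exact le_antisymm (supFst_le_n C hI) (le_trans (le_of_eq ha.symm) (le_supFst C a))

lemma supFst_lt_of_not_inj (C : Fin n → ℕ × ℕ) (hn : 1 ≤ n) (hI : Inv C)
    (hone : ∀ a, 1 ≤ (C a).1)
    (hninj : ¬ Function.Injective (fun a => (C a).1)) :
    supFst C < n := by
  have hc : cnt C n = 0 := by
    by_contra h
    exact hninj (inj_of_cnt C hn hI hone (by omega))
  have : ∀ a, (C a).1 < n := by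
    intro a
    by_contra h
    push_neg at h
    have : 0 < cnt C n := Finset.card_pos.2 ⟨a, by simp [h]⟩
    omega
  have : supFst C ≤ n - 1 := Finset.sup_le (fun a _ => by have := this a; omega)
  omega

/-- my_ids frozen when injective -/
lemma step_fst_of_inj (i : Interaction n) (C : Fin n → ℕ × ℕ)
    (hinj : Function.Injective (fun a => (C a).1)) (a : Fin n) :
    ((applyRule nameRule i C) a).1 = (C a).1 := by
  rw [step_fst]
  apply if_neg
  rintro ⟨-, he⟩
  exact i.ne (hinj he)

def sumFst (C : Fin n → ℕ × ℕ) : ℕ := ∑ a, (C a).1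

lemma sumFst_collision (C : Fin n → ℕ × ℕ) (a b : Fin n) (hab : a ≠ b)
    (he : (C a).1 = (C b).1) :
    sumFst (applyRule nameRule ⟨a, b, hab⟩ C) = sumFst C + 1 := by
  set i : Interaction n := ⟨a, b, hab⟩ with hi
  have hfst : ∀ x, ((applyRule nameRule i C) x).1 =
      Function.update (fun y => (C y).1) b ((C b).1 + 1) x := by
    intro x
    rw [step_fst, Function.update_apply]
    have hs : (C i.s).1 = (C i.r).1 := he
    by_cases hx : x = b
    · simp [hx, hi, hs, he]
    · have : ¬ (x = i.r ∧ (C i.s).1 = (C i.r).1) := fun hc => hx hc.1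
      simp [this, hx]
  unfold sumFst
  rw [Finset.sum_congr rfl (fun x _ => hfst x)]
  rw [Finset.sum_update_of_mem (Finset.mem_univ b)]
  rw [Finset.sum_eq_sum_sdiff_singleton_add (Finset.mem_univ b) (fun y => (C y).1)]
  omega

lemma sumFst_step_mono (i : Interaction n) (C : Fin n → ℕ × ℕ) :
    sumFst C ≤ sumFst (applyRule nameRule i C) :=
  Finset.sum_le_sum (fun a _ => step_fst_mono i C a)

lemma monotone_bounded_stab (f : ℕ → ℕ) (hmono : Monotone f) (B : ℕ)
    (hB : ∀ m, f m ≤ B) : ∃ m₀, ∀ m, m₀ ≤ m → f m = f m₀ := by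
  classical
  set T := (Finset.range (B+1)).filter (fun v => ∃ m, f m = v) with hT
  have hne : T.Nonempty := ⟨f 0, by
    simp only [hT, Finset.mem_filter, Finset.mem_range]
    exact ⟨Nat.lt_succ_of_le (hB 0), 0, rfl⟩⟩
  have hmem : T.max' hne ∈ (Finset.range (B+1)).filter (fun v => ∃ m, f m = v) :=
    Finset.max'_mem T hne
  rw [Finset.mem_filter] at hmem
  obtain ⟨-, m₀, hm₀⟩ := hmem
  refine ⟨m₀, fun m hm => ?_⟩
  have h1 : f m ≤ T.max' hne := Finset.le_max' T (f m) (by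
    simp only [hT, Finset.mem_filter, Finset.mem_range]
    exact ⟨Nat.lt_succ_of_le (hB m), m, rfl⟩)
  have h2 : f m₀ ≤ f m := hmono hm
  omega

section Exec

variable (I : ℕ → Interaction n) (Γ : ℕ → Fin n → ℕ × ℕ)
  (hstep : ∀ m, Γ (m+1) = applyRule nameRule (I m) (Γ m))
  (h0 : ∀ a, Γ 0 a = (1, 1))

include hstep

lemma fst_mono_exec : ∀ m m', m ≤ m' → ∀ a, (Γ m a).1 ≤ (Γ m' a).1 := by
  intro m m' h a
  induction m', h using Nat.le_induction with
  | base => exact le_refl _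
  | succ k hk ih =>
    rw [hstep k]
    exact le_trans ih (step_fst_mono (I k) (Γ k) a)

lemma snd_mono_exec : ∀ m m', m ≤ m' → ∀ a, (Γ m a).2 ≤ (Γ m' a).2 := by
  intro m m' h a
  induction m', h using Nat.le_induction with
  | base => exact le_refl _
  | succ k hk ih =>
    rw [hstep k]
    exact le_trans ih (step_snd_mono (I k) (Γ k) a)

include h0

lemma Inv_exec : ∀ m, Inv (Γ m) := by
  intro m
  induction m with
  | zero =>
    intro v hv
    exfalso
    have : cnt (Γ 0) (v+2) = 0 := by
      unfold cnt
      apply Finset.card_eq_zero.2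
      apply Finset.filter_eq_empty_iff.2
      intro a _
      rw [h0 a]
      omega
    omega
  | succ k ih =>
    rw [hstep k]
    exact Inv_step (I k) (Γ k) ih

lemma one_le_fst_exec : ∀ m a, 1 ≤ (Γ m a).1 := by
  intro m a
  have := fst_mono_exec I Γ hstep 0 m (Nat.zero_le m) a
  rw [h0 a] at this
  exact this

lemma fst_le_snd_exec : ∀ m a, (Γ m a).1 ≤ (Γ m a).2 := by
  intro m
  induction m with
  | zero => intro a; rw [h0 a]
  | succ k ih =>
    intro a
    rw [hstep k]
    exact step_fst_le_snd (I k) (Γ k) ih a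

lemma snd_le_supFst_exec : ∀ m a, (Γ m a).2 ≤ supFst (Γ m) := by
  intro m
  induction m with
  | zero =>
    intro a
    have h1 := le_supFst (Γ 0) a
    rw [h0 a] at h1 ⊢
    exact h1
  | succ k ih =>
    intro a
    rw [hstep k]
    exact step_snd_le_supFst (I k) (Γ k) ih a

lemma stab_exec (m : ℕ) (hinj : Function.Injective (fun a => (Γ m a).1)) :
    ∀ m', m ≤ m' → ∀ a, (Γ m' a).1 = (Γ m a).1 := by
  intro m' h
  induction m', h using Nat.le_induction with
  | base => intro a; rfl
  | succ k hk ih =>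
    intro a
    rw [hstep k]
    rw [step_fst_of_inj (I k) (Γ k) ?_ a]
    · exact ih a
    · intro x y hxy
      apply hinj
      have hxy' : (Γ k x).1 = (Γ k y).1 := hxy
      rw [ih x, ih y] at hxy'
      exact hxy'

end Exec

end NameAux

/-- Correctness of the naming protocol `N_n`: in every globally fair execution from the
all-`(1,1)` initial configuration, (i) the maximum value `M` of `max_id` strictly
increases at some later point iff two agents currently share the same `my_id`;
(ii) eventually the `my_id`s are pairwise distinct, stable forever after, and equal
exactly to `{1, …, n}`; and (iii) when `M = n`, each agent already has a unique stable
value of `my_id`. -/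
theorem naming_protocol_correct (n : ℕ) (hn : 1 ≤ n) (I : ℕ → Interaction n)
    (Γ : ℕ → Fin n → ℕ × ℕ)
    (hΓ : Γ = execWith (fun m C => applyRule nameRule (I m) C) (fun _ => (1, 1)))
    (hGF : GloballyFair (TWStep nameRule) Γ) :
    (∀ m : ℕ,
      (∃ m', m ≤ m' ∧ (Finset.univ.sup fun a => (Γ m a).2)
          < (Finset.univ.sup fun a => (Γ m' a).2)) ↔
        ∃ a b : Fin n, a ≠ b ∧ (Γ m a).1 = (Γ m b).1) ∧
    (∃ m : ℕ, (∀ m', m ≤ m' → ∀ a, (Γ m' a).1 = (Γ m a).1) ∧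
      Function.Injective (fun a : Fin n => (Γ m a).1) ∧
      (Finset.univ.image fun a : Fin n => (Γ m a).1) = Finset.Icc 1 n) ∧
    (∀ m : ℕ, (Finset.univ.sup fun a => (Γ m a).2) = n →
      Function.Injective (fun a : Fin n => (Γ m a).1) ∧
      ∀ m', m ≤ m' → ∀ a, (Γ m' a).1 = (Γ m a).1) := by
  have hstep : ∀ m, Γ (m+1) = applyRule nameRule (I m) (Γ m) := by
    intro m; rw [hΓ]; rfl
  have h0 : ∀ a, Γ 0 a = (1, 1) := by intro a; rw [hΓ]; rfl
  clear hΓ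
  have hInv := NameAux.Inv_exec I Γ hstep h0
  have hone := NameAux.one_le_fst_exec I Γ hstep h0
  have hfs := NameAux.fst_le_snd_exec I Γ hstep h0
  have hss := NameAux.snd_le_supFst_exec I Γ hstep h0
  have hstab := NameAux.stab_exec I Γ hstep h0
  set M : ℕ → ℕ := fun m => Finset.univ.sup (fun a => (Γ m a).2) with hM
  have hMdef : ∀ k, (Finset.univ.sup fun a => (Γ k a).2) = M k := fun _ => rfl
  have hMle : ∀ m, M m ≤ NameAux.supFst (Γ m) := by
    intro m
    simp only [hM]
    exact Finset.sup_le (fun a _ => hss m a)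
  have hMn : ∀ m, M m ≤ n := fun m => le_trans (hMle m) (NameAux.supFst_le_n _ (hInv m))
  have hInjM : ∀ m, Function.Injective (fun a => (Γ m a).1) → M m = n := by
    intro m hinj
    have hsup := NameAux.supFst_eq_n (Γ m) hn (hInv m) (hone m) hinj
    have hge : NameAux.supFst (Γ m) ≤ M m := by
      simp only [hM]
      exact Finset.sup_le (fun a _ => le_trans (hfs m a)
        (Finset.le_sup (f := fun b => (Γ m b).2) (Finset.mem_univ a)))
    have h1 := hMle m
    omega
  have hNinjM : ∀ m, ¬Function.Injective (fun a => (Γ m a).1) → M m < n :=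
    fun m h => lt_of_le_of_lt (hMle m)
      (NameAux.supFst_lt_of_not_inj (Γ m) hn (hInv m) (hone m) h)
  -- existence of an injective time, by global fairness
  have hEx : ∃ m₁, Function.Injective (fun a => (Γ m₁ a).1) := by
    by_contra hno
    push_neg at hno
    have hsmono : Monotone (fun m => NameAux.sumFst (Γ m)) := by
      apply monotone_nat_of_le_succ
      intro m
      rw [hstep m]
      exact NameAux.sumFst_step_mono (I m) (Γ m)
    have hsbd : ∀ m, NameAux.sumFst (Γ m) ≤ n * n := by
      intro m
      show ∑ a, (Γ m a).1 ≤ n * n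
      calc ∑ a, (Γ m a).1 ≤ ∑ _a : Fin n, n :=
            Finset.sum_le_sum (fun a _ => NameAux.fst_le_n _ (hInv m) a)
        _ = n * n := by simp [Finset.sum_const, mul_comm]
    obtain ⟨m₀, hstab0⟩ := NameAux.monotone_bounded_stab _ hsmono (n*n) hsbd
    set s := NameAux.sumFst (Γ m₀) with hs
    set S : Set (Fin n → ℕ × ℕ) :=
      {C | ¬Function.Injective (fun a => (C a).1) ∧ NameAux.sumFst C = s} with hS
    set S' : Set (Fin n → ℕ × ℕ) := {C | NameAux.sumFst C = s + 1} with hS'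
    have hPC : PermClosed S := by
      intro C hC σ
      obtain ⟨h1, h2⟩ := hC
      constructor
      · intro hinj
        apply h1
        have heq : (fun a => (C a).1) = (fun a => ((C ∘ σ) a).1) ∘ σ.symm := by
          funext a; simp
        rw [heq]
        exact hinj.comp σ.symm.injective
      · show NameAux.sumFst (C ∘ σ) = s
        rw [← h2]
        show ∑ a, (C (σ a)).1 = ∑ a, (C a).1
        exact Fintype.sum_equiv σ _ _ (fun a => rfl)
    have hPC' : PermClosed S' := by
      intro C hC σ
      show NameAux.sumFst (C ∘ σ) = s + 1
      rw [← hC]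
      show ∑ a, (C (σ a)).1 = ∑ a, (C a).1
      exact Fintype.sum_equiv σ _ _ (fun a => rfl)
    have hstep' : ∀ C ∈ S, ∃ C' ∈ S', TWStep nameRule C C' := by
      intro C hC
      obtain ⟨hninj, hsum⟩ := hC
      rw [Function.not_injective_iff] at hninj
      obtain ⟨a, b, he, hab⟩ := hninj
      refine ⟨applyRule nameRule ⟨a, b, hab⟩ C, ?_, ⟨⟨a, b, hab⟩, rfl⟩⟩
      show NameAux.sumFst _ = s + 1
      rw [NameAux.sumFst_collision C a b hab he, hsum]
    have hinf : {m | Γ m ∈ S}.Infinite := by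
      apply Set.Infinite.mono (s := Set.Ici m₀) ?_
      · exact Set.Ici_infinite m₀
      · intro m hm
        exact ⟨hno m, hstab0 m hm⟩
    have hinf' := hGF S S' hPC hPC' hstep' hinf
    obtain ⟨m, hmS', hm⟩ := hinf'.exists_gt m₀
    have h1 : NameAux.sumFst (Γ m) = s + 1 := hmS'
    have h2 := hstab0 m hm.le
    omega
  obtain ⟨m₁, hm₁⟩ := hEx
  refine ⟨?_, ?_, ?_⟩
  · intro m
    constructor
    · rintro ⟨m', hmm', hlt⟩
      rw [hMdef, hMdef] at hlt
      by_contra hno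
      push_neg at hno
      have hinj : Function.Injective (fun a => (Γ m a).1) := by
        intro x y hxy
        by_contra hne
        exact hno x y hne hxy
      have h1 := hInjM m hinj
      have h2 := hMn m'
      omega
    · rintro ⟨a, b, hab, he⟩
      have hninj : ¬Function.Injective (fun x => (Γ m x).1) := fun hinj => hab (hinj he)
      have hlt := hNinjM m hninj
      have hinj' : Function.Injective (fun x => (Γ (max m m₁) x).1) := by
        have hfr := hstab m₁ hm₁ (max m m₁) (le_max_right _ _)
        intro x y hxy
        apply hm₁
        have hxy' : (Γ (max m m₁) x).1 = (Γ (max m m₁) y).1 := hxy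
        rw [hfr x, hfr y] at hxy'
        exact hxy'
      have hMeq := hInjM _ hinj'
      refine ⟨max m m₁, le_max_left _ _, ?_⟩
      rw [hMdef, hMdef]
      omega
  · exact ⟨m₁, hstab m₁ hm₁, hm₁,
      NameAux.image_eq_Icc (Γ m₁) (hInv m₁) (hone m₁) hm₁⟩
  · intro m hMm
    rw [hMdef] at hMm
    have hsge : n ≤ NameAux.supFst (Γ m) := by have := hMle m; omega
    have hex : ∃ a, n ≤ (Γ m a).1 := by
      by_contra h
      push_neg at h
      have hle : NameAux.supFst (Γ m) ≤ n - 1 :=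
        Finset.sup_le (fun a _ => by have := h a; omega)
      omega
    obtain ⟨a, ha⟩ := hex
    have hpos : 0 < NameAux.cnt (Γ m) n :=
      Finset.card_pos.2 ⟨a, Finset.mem_filter.2 ⟨Finset.mem_univ a, ha⟩⟩
    have hinj := NameAux.inj_of_cnt (Γ m) hn (hInv m) (hone m) hpos
    exact ⟨hinj, hstab m hinj⟩
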